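/- Let F be a finite field with q elements, let n ≥ 2 and 2 ≤ i ≤ n, and let l_i ≥ l_{i+1} ≥ ⋯ ≥ l_n ≥ 1 be integers. Then there exist a finite set L of (n−i+1)-tuples of natural numbers, with every tuple (l̃_i, …, l̃_n) ∈ L satisfying l̃_i + l̃_{i+1} + ⋯ + l̃_n < l_i + l_{i+1} + ⋯ + l_n, and integer coefficients c_{l̃} for l̃ ∈ L (depending only on i and the tuples, not on l_1,…,l_{i-1}), such that for every choice of natural numbers l_1, …, l_{i-1}: #R^i_{n;l_1,…,l_{i-1},l_i,…,l_n} = Σ_{l̃ ∈ L} c_{l̃} · #P_{n;l_1,…,l_{i-1},l̃_i,…,l̃_n}. -/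

import Mathlib

open Polynomial Matrix

/-- `P_{n;l₁,…,lₙ}`: the set of `A ∈ GL_n(F[x])` with `deg a_{i,j} ≤ l_j` for all `i, j` and
constant-term matrix equal to the identity. -/
def Pset (F : Type*) [Field F] (n : ℕ) (l : Fin n → ℕ) : Set (GL (Fin n) F[X]) :=
  {A | (∀ i j, ((A : Matrix (Fin n) (Fin n) F[X]) i j).degree ≤ (l j : ℕ)) ∧
       (A : Matrix (Fin n) (Fin n) F[X]).map (fun p => p.coeff 0) = 1}

/-- `v_j(A) ∈ Fⁿ`: the vector of coefficients of `x^{l_j}` in the `j`-th column of `A`. -/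
def colVec (F : Type*) [Field F] (n : ℕ) (l : Fin n → ℕ) (A : GL (Fin n) F[X])
    (j : Fin n) : Fin n → F :=
  fun r => ((A : Matrix (Fin n) (Fin n) F[X]) r j).coeff (l j)

/-- `R^i_{n;l₁,…,lₙ}`: those `A ∈ P_{n;l₁,…,lₙ}` such that the vectors `v_i(A),…,vₙ(A)`
(columns with 1-based index `≥ i`) are linearly dependent over `F`. -/
def Rset (F : Type*) [Field F] (n : ℕ) (l : Fin n → ℕ) (i : ℕ) : Set (GL (Fin n) F[X]) :=
  {A ∈ Pset F n l |
    ¬ LinearIndependent F (fun j : {j : Fin n // i ≤ (j : ℕ) + 1} => colVec F n l A j)}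

namespace Stmt9

/-! ### Generic helpers -/

section ColMat

variable {R : Type*} [CommRing R] {n : ℕ} (j0 : Fin n)

/-- A matrix supported on column `j0`. -/
def colMat (w : Fin n → R) : Matrix (Fin n) (Fin n) R :=
  Matrix.of fun r c => if c = j0 then w r else 0

variable (w : Fin n → R)

lemma mul_colMat_apply (M : Matrix (Fin n) (Fin n) R) (r c : Fin n) :
    (M * colMat j0 w) r c = if c = j0 then ∑ m, M r m * w m else 0 := by
  rw [Matrix.mul_apply]
  by_cases h : c = j0
  · subst h
    rw [if_pos rfl]
    exact Finset.sum_congr rfl fun m _ => by simp [colMat]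
  · rw [if_neg h]
    exact Finset.sum_eq_zero fun m _ => by simp [colMat, h]

lemma colMat_mul_apply (M : Matrix (Fin n) (Fin n) R) (r c : Fin n) :
    (colMat j0 w * M) r c = w r * M j0 c := by
  rw [Matrix.mul_apply, Finset.sum_eq_single j0]
  · simp [colMat]
  · intro m _ hm
    simp [colMat, hm]
  · intro h
    exact absurd (Finset.mem_univ _) h

lemma colMat_mul_colMat (w' : Fin n → R) (hw' : w' j0 = 0) :
    colMat j0 w * colMat j0 w' = 0 := by
  ext r c
  rw [colMat_mul_apply]
  simp [colMat, hw']

/-- The unit `1 - colMat j0 w`, with inverse `1 + colMat j0 w`. -/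
def colUnit (hw : w j0 = 0) : (Matrix (Fin n) (Fin n) R)ˣ where
  val := 1 - colMat j0 w
  inv := 1 + colMat j0 w
  val_inv := by
    have h : colMat j0 w * colMat j0 w = 0 := colMat_mul_colMat j0 w w hw
    have : (1 - colMat j0 w) * (1 + colMat j0 w) = 1 - colMat j0 w * colMat j0 w := by
      noncomm_ring
    rw [this, h, sub_zero]
  inv_val := by
    have h : colMat j0 w * colMat j0 w = 0 := colMat_mul_colMat j0 w w hw
    have : (1 + colMat j0 w) * (1 - colMat j0 w) = 1 - colMat j0 w * colMat j0 w := by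
      noncomm_ring
    rw [this, h, sub_zero]

lemma map_colMat {S : Type*} [CommRing S] (f : R →+* S) :
    (colMat j0 w).map f = colMat j0 (f ∘ w) := by
  ext r c
  simp [colMat, Matrix.map_apply, apply_ite f]

end ColMat

section NcardUnion

lemma ncard_biUnion {ι α : Type*} (s : Finset ι) (f : ι → Set α)
    (hfin : ∀ i ∈ s, (f i).Finite)
    (hdisj : ∀ i ∈ s, ∀ j ∈ s, i ≠ j → Disjoint (f i) (f j)) :
    (⋃ i ∈ s, f i).ncard = ∑ i ∈ s, (f i).ncard := by
  classical
  induction s using Finset.induction_on with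
  | empty => simp
  | @insert a s ha ih =>
    have hfin' : ∀ i ∈ s, (f i).Finite := fun i hi => hfin i (Finset.mem_insert_of_mem hi)
    have hdisj' : ∀ i ∈ s, ∀ j ∈ s, i ≠ j → Disjoint (f i) (f j) :=
      fun i hi j hj hij =>
        hdisj i (Finset.mem_insert_of_mem hi) j (Finset.mem_insert_of_mem hj) hij
    have hdis : Disjoint (f a) (⋃ i ∈ s, f i) := by
      rw [Set.disjoint_iUnion₂_right]
      intro i hi
      exact hdisj a (Finset.mem_insert_self _ _) i (Finset.mem_insert_of_mem hi)
        (fun h => ha (h ▸ hi))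
    have hf2 : (⋃ i ∈ s, f i).Finite := by
      apply Set.Finite.biUnion s.finite_toSet
      intro i hi
      exact hfin' i hi
    rw [Finset.set_biUnion_insert, Set.ncard_union_eq hdis (hfin a (Finset.mem_insert_self _ _)) hf2,
      ih hfin' hdisj', Finset.sum_insert ha]

end NcardUnion

variable {F : Type*} [Field F] [Fintype F] {n : ℕ}

/-! ### Finiteness of `Pset` -/

lemma pset_finite (l : Fin n → ℕ) : (Pset F n l).Finite := by
  classical
  set d : ℕ := (Finset.univ.sup l) + 1 with hd
  haveI : Finite (degreeLT F d) := Finite.of_equiv _ (degreeLTEquiv F d).toEquiv.symm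
  set g : GL (Fin n) F[X] → (Fin n → Fin n → degreeLT F d) := fun A r c =>
    if h : ((A : Matrix (Fin n) (Fin n) F[X]) r c) ∈ degreeLT F d then ⟨_, h⟩ else 0 with hg
  have hmem : ∀ (C : GL (Fin n) F[X]), C ∈ Pset F n l → ∀ r c,
      ((C : Matrix (Fin n) (Fin n) F[X]) r c) ∈ degreeLT F d := by
    intro C hC r c
    rw [Polynomial.mem_degreeLT]
    calc ((C : Matrix (Fin n) (Fin n) F[X]) r c).degree ≤ ((l c : ℕ) : WithBot ℕ) := hC.1 r c
      _ < (d : WithBot ℕ) := by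
          exact_mod_cast Nat.lt_succ_of_le (Finset.le_sup (Finset.mem_univ c))
  have hinj : Set.InjOn g (Pset F n l) := by
    intro A hA B hB hAB
    apply Units.ext
    refine Matrix.ext fun r c => ?_
    have h1 := congrFun (congrFun hAB r) c
    rw [hg] at h1
    simp only [dif_pos (hmem A hA r c), dif_pos (hmem B hB r c)] at h1
    exact Subtype.ext_iff.mp h1
  exact Set.Finite.of_finite_image (Set.toFinite _) hinj

/-! ### The twist linear equivalence -/

/-- The linear automorphism `v ↦ v + (v j0) • w0` of `Fin n → F`, where `w0 j0 = 0`. -/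
def twist (j0 : Fin n) (w0 : Fin n → F) (hw0 : w0 j0 = 0) :
    (Fin n → F) ≃ₗ[F] (Fin n → F) where
  toFun v := fun r => v r + w0 r * v j0
  invFun v := fun r => v r - w0 r * v j0
  map_add' u v := by funext r; simp only [Pi.add_apply]; ring
  map_smul' a v := by funext r; simp only [Pi.smul_apply, smul_eq_mul, RingHom.id_apply]; ring
  left_inv v := by
    funext r
    have h : v j0 + w0 j0 * v j0 = v j0 := by rw [hw0]; ring
    simp only [h]; ring
  right_inv v := by
    funext r
    have h : v j0 - w0 j0 * v j0 = v j0 := by rw [hw0]; ring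
    simp only [h]; ring

lemma twist_linearIndependent_iff {ι : Type*} (j0 : Fin n) (w0 : Fin n → F) (hw0 : w0 j0 = 0)
    (v : ι → Fin n → F) :
    LinearIndependent F (fun k => twist j0 w0 hw0 (v k)) ↔ LinearIndependent F v := by
  exact LinearMap.linearIndependent_iff (twist j0 w0 hw0).toLinearMap
    (LinearEquiv.ker (twist j0 w0 hw0))

/-! ### The main objects -/

/-- The subset of `Pset` where the top coefficient vectors of the columns in `K`
are linearly dependent. -/
def Dset (F : Type*) [Field F] (n : ℕ) (l : Fin n → ℕ) (K : Finset (Fin n)) :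
    Set (GL (Fin n) F[X]) :=
  {A | A ∈ Pset F n l ∧
    ¬ LinearIndependent F (fun k : {x // x ∈ K} => colVec F n l A ↑k)}

lemma dset_subset (l : Fin n → ℕ) (K : Finset (Fin n)) : Dset F n l K ⊆ Pset F n l :=
  fun _ h => h.1

/-- The linear-dependence split over an inserted index. -/
lemma dep_split (l : Fin n → ℕ) (K : Finset (Fin n)) (j0 : Fin n) (hj0 : j0 ∉ K)
    (A : GL (Fin n) F[X]) :
    (¬ LinearIndependent F (fun k : {x // x ∈ insert j0 K} => colVec F n l A ↑k)) ↔
      (¬ LinearIndependent F (fun k : {x // x ∈ K} => colVec F n l A ↑k)) ∨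
      ((LinearIndependent F (fun k : {x // x ∈ K} => colVec F n l A ↑k)) ∧
        ∃ lam : {x // x ∈ K} → F,
          colVec F n l A j0 = ∑ k, lam k • colVec F n l A ↑k) := by
  classical
  rw [← linearIndependent_equiv (Finset.subtypeInsertEquivOption hj0).symm,
    linearIndependent_option]
  have hsome : (((fun k : {x // x ∈ insert j0 K} => colVec F n l A ↑k) ∘
      (Finset.subtypeInsertEquivOption hj0).symm) ∘ some)
      = fun k : {x // x ∈ K} => colVec F n l A ↑k := rfl
  have hnone : ((fun k : {x // x ∈ insert j0 K} => colVec F n l A ↑k) ∘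
      (Finset.subtypeInsertEquivOption hj0).symm) none
      = colVec F n l A j0 := rfl
  rw [hsome, hnone, Submodule.mem_span_range_iff_exists_fun]
  constructor
  · intro h
    by_cases hK : LinearIndependent F (fun k : {x // x ∈ K} => colVec F n l A ↑k)
    · right
      refine ⟨hK, ?_⟩
      rcases not_and_or.mp h with h' | h'
      · exact absurd hK h'
      · obtain ⟨lam, hlam⟩ := not_not.mp h'
        exact ⟨lam, hlam.symm⟩
    · exact Or.inl hK
  · rintro (h | ⟨hK, lam, hlam⟩)
    · exact fun hc => h hc.1
    · exact fun hc => hc.2 ⟨lam, hlam.symm⟩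

/-! ### The key bijection -/

lemma slam_ncard (l : Fin n → ℕ) (K : Finset (Fin n)) (j0 : Fin n) (hj0 : j0 ∉ K)
    (hle : ∀ k ∈ K, l k ≤ l j0) (h1 : 1 ≤ l j0) (lam : {x // x ∈ K} → F) :
    ({A : GL (Fin n) F[X] | A ∈ Pset F n l ∧
        LinearIndependent F (fun k : {x // x ∈ K} => colVec F n l A ↑k) ∧
        colVec F n l A j0 = ∑ k, lam k • colVec F n l A ↑k}).ncard
      = ({B : GL (Fin n) F[X] | B ∈ Pset F n (Function.update l j0 (l j0 - 1)) ∧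
          LinearIndependent F
            (fun k : {x // x ∈ K} =>
              colVec F n (Function.update l j0 (l j0 - 1)) B ↑k)}).ncard := by
  classical
  set l' : Fin n → ℕ := Function.update l j0 (l j0 - 1) with hl'
  have hl'ne : ∀ c : Fin n, c ≠ j0 → l' c = l c := fun c hc => Function.update_of_ne hc _ _
  have hl'j0 : l' j0 = l j0 - 1 := Function.update_self _ _ _
  set w : Fin n → F[X] := fun m =>
    if hm : m ∈ K then Polynomial.C (lam ⟨m, hm⟩) * X ^ (l j0 - l m) else 0 with hw
  set w0 : Fin n → F := fun m =>
    if hm : m ∈ K then (if l m = l j0 then lam ⟨m, hm⟩ else 0) else 0 with hw0def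
  have hwj0 : w j0 = 0 := by simp [hw, hj0]
  have hw0j0 : w0 j0 = 0 := by simp [hw0def, hj0]
  -- degree bound for the correction sums
  have hdegw : ∀ g : Fin n → F[X], (∀ m, (g m).degree ≤ ((l m : ℕ) : WithBot ℕ)) →
      (∑ m, g m * w m).degree ≤ ((l j0 : ℕ) : WithBot ℕ) := by
    intro g hg
    refine (Polynomial.degree_sum_le _ _).trans ?_
    rw [Finset.sup_le_iff]
    intro m _
    by_cases hm : m ∈ K
    · have hwm : w m = Polynomial.C (lam ⟨m, hm⟩) * X ^ (l j0 - l m) := by simp [hw, hm]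
      rw [hwm]
      refine (Polynomial.degree_mul_le _ _).trans ?_
      have h2 : (Polynomial.C (lam ⟨m, hm⟩) * (X : F[X]) ^ (l j0 - l m)).degree
          ≤ (((l j0 - l m : ℕ) : ℕ) : WithBot ℕ) := by
        refine (Polynomial.degree_mul_le _ _).trans ?_
        rw [Polynomial.degree_X_pow]
        calc (Polynomial.C (lam ⟨m, hm⟩)).degree + ((l j0 - l m : ℕ) : WithBot ℕ)
            ≤ 0 + ((l j0 - l m : ℕ) : WithBot ℕ) :=
              add_le_add_left Polynomial.degree_C_le _
          _ = ((l j0 - l m : ℕ) : WithBot ℕ) := zero_add _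
      calc (g m).degree + (Polynomial.C (lam ⟨m, hm⟩) * (X : F[X]) ^ (l j0 - l m)).degree
          ≤ ((l m : ℕ) : WithBot ℕ) + ((l j0 - l m : ℕ) : WithBot ℕ) :=
            add_le_add (hg m) h2
        _ = ((l j0 : ℕ) : WithBot ℕ) := by
            rw [← Nat.cast_add, Nat.add_sub_cancel' (hle m hm)]
    · have hwm : w m = 0 := by simp [hw, hm]
      rw [hwm, mul_zero]
      simp
  -- top coefficient of the correction sums
  have hcoeffw : ∀ g : Fin n → F[X],
      (∑ m, g m * w m).coeff (l j0)
        = ∑ k : {x // x ∈ K}, lam k * (g ↑k).coeff (l ↑k) := by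
    intro g
    rw [Polynomial.finset_sum_coeff]
    have hterm : ∀ m, (g m * w m).coeff (l j0)
        = if hm : m ∈ K then lam ⟨m, hm⟩ * (g m).coeff (l m) else 0 := by
      intro m
      by_cases hm : m ∈ K
      · rw [dif_pos hm]
        have hwm : w m = Polynomial.C (lam ⟨m, hm⟩) * X ^ (l j0 - l m) := by simp [hw, hm]
        rw [hwm, show g m * (Polynomial.C (lam ⟨m, hm⟩) * X ^ (l j0 - l m))
            = Polynomial.C (lam ⟨m, hm⟩) * (g m * X ^ (l j0 - l m)) by ring,
          Polynomial.coeff_C_mul, Polynomial.coeff_mul_X_pow',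
          if_pos (Nat.sub_le (l j0) (l m))]
        have harith : l j0 - (l j0 - l m) = l m := by
          have := hle m hm; omega
        rw [harith]
      · rw [dif_neg hm]
        have hwm : w m = 0 := by simp [hw, hm]
        rw [hwm, mul_zero, Polynomial.coeff_zero]
    rw [Finset.sum_congr rfl fun m _ => hterm m]
    rw [← Finset.sum_subset (Finset.subset_univ K)
      (fun m _ hm => dif_neg hm)]
    rw [← Finset.sum_attach K fun m => if hm : m ∈ K then lam ⟨m, hm⟩ * (g m).coeff (l m) else 0,
      Finset.univ_eq_attach]
    refine Finset.sum_congr rfl fun k _ => ?_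
    rw [dif_pos k.2]
  -- constant coefficient of the weights
  have hwcoeff0 : ∀ m, (w m).coeff 0 = w0 m := by
    intro m
    by_cases hm : m ∈ K
    · have hwm : w m = Polynomial.C (lam ⟨m, hm⟩) * X ^ (l j0 - l m) := by simp [hw, hm]
      have hw0m : w0 m = if l m = l j0 then lam ⟨m, hm⟩ else 0 := by simp [hw0def, hm]
      rw [hwm, hw0m, Polynomial.coeff_C_mul, Polynomial.coeff_X_pow]
      by_cases hd : l m = l j0
      · rw [if_pos hd, if_pos (by omega : (0 : ℕ) = l j0 - l m), mul_one]
      · have := hle m hm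
        rw [if_neg hd, if_neg (by omega : ¬ (0 : ℕ) = l j0 - l m), mul_zero]
    · have hwm : w m = 0 := by simp [hw, hm]
      have hw0m : w0 m = 0 := by simp [hw0def, hm]
      rw [hwm, hw0m, Polynomial.coeff_zero]
  -- the units
  set Eu : (Matrix (Fin n) (Fin n) F[X])ˣ := colUnit j0 w hwj0 with hEu
  set Uu : (Matrix (Fin n) (Fin n) F[X])ˣ :=
    colUnit j0 (fun m => Polynomial.C (w0 m)) (by simp [hw0j0]) with hUu
  set φ : GL (Fin n) F[X] → GL (Fin n) F[X] := fun A => Uu⁻¹ * A * Eu with hφ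
  have hEuval : (Eu : Matrix (Fin n) (Fin n) F[X]) = 1 - colMat j0 w := rfl
  have hEuinv : ((Eu⁻¹ : (Matrix (Fin n) (Fin n) F[X])ˣ) : Matrix (Fin n) (Fin n) F[X])
      = 1 + colMat j0 w := rfl
  have hUuval : (Uu : Matrix (Fin n) (Fin n) F[X])
      = 1 - colMat j0 (fun m => Polynomial.C (w0 m)) := rfl
  have hUuinv : ((Uu⁻¹ : (Matrix (Fin n) (Fin n) F[X])ˣ) : Matrix (Fin n) (Fin n) F[X])
      = 1 + colMat j0 (fun m => Polynomial.C (w0 m)) := rfl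
  -- entry formulas
  have hmulE : ∀ (M : Matrix (Fin n) (Fin n) F[X]) (r c : Fin n),
      (M * (1 - colMat j0 w)) r c = M r c - (if c = j0 then ∑ m, M r m * w m else 0) := by
    intro M r c
    rw [Matrix.mul_sub, Matrix.mul_one, Matrix.sub_apply, mul_colMat_apply]
  have hmulE' : ∀ (M : Matrix (Fin n) (Fin n) F[X]) (r c : Fin n),
      (M * (1 + colMat j0 w)) r c = M r c + (if c = j0 then ∑ m, M r m * w m else 0) := by
    intro M r c
    rw [Matrix.mul_add, Matrix.mul_one, Matrix.add_apply, mul_colMat_apply]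
  have hmulU : ∀ (M : Matrix (Fin n) (Fin n) F[X]) (r c : Fin n),
      ((1 + colMat j0 (fun m => Polynomial.C (w0 m))) * M) r c
        = M r c + Polynomial.C (w0 r) * M j0 c := by
    intro M r c
    rw [Matrix.add_mul, Matrix.one_mul, Matrix.add_apply, colMat_mul_apply]
  have hmulU' : ∀ (M : Matrix (Fin n) (Fin n) F[X]) (r c : Fin n),
      ((1 - colMat j0 (fun m => Polynomial.C (w0 m))) * M) r c
        = M r c - Polynomial.C (w0 r) * M j0 c := by
    intro M r c
    rw [Matrix.sub_mul, Matrix.one_mul, Matrix.sub_apply, colMat_mul_apply]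
  -- auxiliary degree lemmas
  have hCmul : ∀ (a : F) (p : F[X]), (Polynomial.C a * p).degree ≤ p.degree := by
    intro a p
    calc (Polynomial.C a * p).degree ≤ (Polynomial.C a).degree + p.degree :=
          Polynomial.degree_mul_le _ _
      _ ≤ 0 + p.degree := add_le_add_left Polynomial.degree_C_le _
      _ = p.degree := zero_add _
  have hreduce : ∀ p : F[X], p.degree ≤ ((l j0 : ℕ) : WithBot ℕ) → p.coeff (l j0) = 0 →
      p.degree ≤ (((l j0 - 1 : ℕ) : ℕ) : WithBot ℕ) := by
    intro p hdeg hc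
    rw [Polynomial.degree_le_iff_coeff_zero] at hdeg ⊢
    intro m hm
    have hm' : l j0 - 1 < m := by exact_mod_cast hm
    by_cases hm2 : m = l j0
    · rw [hm2]; exact hc
    · exact hdeg m (by exact_mod_cast (by omega : l j0 < m))
  have hmono : (((l j0 - 1 : ℕ) : ℕ) : WithBot ℕ) ≤ ((l j0 : ℕ) : WithBot ℕ) := by
    exact_mod_cast Nat.sub_le (l j0) 1
  have hlt : (((l j0 - 1 : ℕ) : ℕ) : WithBot ℕ) < ((l j0 : ℕ) : WithBot ℕ) := by
    exact_mod_cast (by omega : l j0 - 1 < l j0)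
  -- forward map
  have hforward : ∀ A : GL (Fin n) F[X],
      (A ∈ Pset F n l ∧ LinearIndependent F (fun k : {x // x ∈ K} => colVec F n l A ↑k) ∧
        colVec F n l A j0 = ∑ k, lam k • colVec F n l A ↑k) →
      (φ A ∈ Pset F n l' ∧
        LinearIndependent F (fun k : {x // x ∈ K} => colVec F n l' (φ A) ↑k)) := by
    intro A hA
    obtain ⟨hP, hLI, hrel⟩ := hA
    have hdegA := hP.1
    have hA0 : ∀ r c, ((A : Matrix (Fin n) (Fin n) F[X]) r c).coeff 0
        = if r = c then 1 else 0 := by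
      intro r c
      have := congrFun (congrFun hP.2 r) c
      rwa [Matrix.map_apply, Matrix.one_apply] at this
    set M1 : Matrix (Fin n) (Fin n) F[X] :=
      (A : Matrix (Fin n) (Fin n) F[X]) * (1 - colMat j0 w) with hM1def
    have hM1 : ∀ r c, M1 r c = (A : Matrix (Fin n) (Fin n) F[X]) r c -
        (if c = j0 then ∑ m, (A : Matrix (Fin n) (Fin n) F[X]) r m * w m else 0) :=
      fun r c => hmulE _ r c
    have hBval : ∀ r c, ((φ A : GL (Fin n) F[X]) : Matrix (Fin n) (Fin n) F[X]) r c
        = M1 r c + Polynomial.C (w0 r) * M1 j0 c := by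
      intro r c
      have hval : ((φ A : GL (Fin n) F[X]) : Matrix (Fin n) (Fin n) F[X])
          = (1 + colMat j0 (fun m => Polynomial.C (w0 m))) * M1 := by
        rw [hφ]
        show ((Uu⁻¹ * A * Eu : (Matrix (Fin n) (Fin n) F[X])ˣ) :
          Matrix (Fin n) (Fin n) F[X]) = _
        rw [Units.val_mul, Units.val_mul, hUuinv, hEuval, mul_assoc, hM1def]
      rw [hval]
      exact hmulU M1 r c
    have hdegM1 : ∀ r c, (M1 r c).degree ≤ ((l c : ℕ) : WithBot ℕ) := by
      intro r c
      rw [hM1 r c]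
      refine (Polynomial.degree_sub_le _ _).trans (max_le (hdegA r c) ?_)
      by_cases hc : c = j0
      · subst hc
        rw [if_pos rfl]
        exact hdegw _ (fun m => hdegA r m)
      · rw [if_neg hc]
        simp
    have hrelr : ∀ r, ((A : Matrix (Fin n) (Fin n) F[X]) r j0).coeff (l j0)
        = ∑ k : {x // x ∈ K}, lam k *
            ((A : Matrix (Fin n) (Fin n) F[X]) r ↑k).coeff (l ↑k) := by
      intro r
      have := congrFun hrel r
      simpa [colVec, Finset.sum_apply, Pi.smul_apply, smul_eq_mul] using this
    have hcoefM1 : ∀ r, (M1 r j0).coeff (l j0) = 0 := by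
      intro r
      rw [hM1 r j0, if_pos rfl, Polynomial.coeff_sub, hcoeffw, hrelr r, sub_self]
    have hcoefB : ∀ r, (((φ A : GL (Fin n) F[X]) : Matrix (Fin n) (Fin n) F[X]) r j0).coeff (l j0)
        = 0 := by
      intro r
      rw [hBval, Polynomial.coeff_add, Polynomial.coeff_C_mul, hcoefM1, hcoefM1,
        mul_zero, add_zero]
    have hdegB : ∀ r c, (((φ A : GL (Fin n) F[X]) : Matrix (Fin n) (Fin n) F[X]) r c).degree
        ≤ ((l' c : ℕ) : WithBot ℕ) := by
      intro r c
      by_cases hc : c = j0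
      · rw [hc, hl'j0]
        refine hreduce _ ?_ (hcoefB r)
        rw [hBval]
        exact (Polynomial.degree_add_le _ _).trans
          (max_le (hdegM1 r j0) ((hCmul _ _).trans (hdegM1 j0 j0)))
      · rw [hl'ne c hc, hBval]
        exact (Polynomial.degree_add_le _ _).trans
          (max_le (hdegM1 r c) ((hCmul _ _).trans (hdegM1 j0 c)))
    have hcoef0M1 : ∀ r c, (M1 r c).coeff 0
        = (if r = c then 1 else 0) - (if c = j0 then w0 r else 0) := by
      intro r c
      rw [hM1 r c, Polynomial.coeff_sub, hA0]
      congr 1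
      by_cases hc : c = j0
      · rw [if_pos hc, if_pos hc, Polynomial.finset_sum_coeff]
        have : ∀ m, ((A : Matrix (Fin n) (Fin n) F[X]) r m * w m).coeff 0
            = if r = m then w0 m else 0 := by
          intro m
          rw [Polynomial.mul_coeff_zero, hA0, hwcoeff0, ite_mul, one_mul, zero_mul]
        rw [Finset.sum_congr rfl fun m _ => this m, Finset.sum_ite_eq]
        simp
      · rw [if_neg hc, if_neg hc, Polynomial.coeff_zero]
    have hB0 : ∀ r c, (((φ A : GL (Fin n) F[X]) : Matrix (Fin n) (Fin n) F[X]) r c).coeff 0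
        = if r = c then 1 else 0 := by
      intro r c
      rw [hBval, Polynomial.coeff_add, Polynomial.coeff_C_mul, hcoef0M1, hcoef0M1]
      by_cases hc : c = j0
      · rw [hc]
        simp [hw0j0]
      · rw [if_neg hc, if_neg hc, sub_zero, sub_zero]
        have : (if (j0 : Fin n) = c then (1 : F) else 0) = 0 := if_neg (fun h => hc h.symm)
        rw [this, mul_zero, add_zero]
    have hvB : ∀ k : {x // x ∈ K},
        colVec F n l' (φ A) ↑k = twist j0 w0 hw0j0 (colVec F n l A ↑k) := by
      intro k
      funext r
      have hkj0 : (↑k : Fin n) ≠ j0 := fun h => hj0 (h ▸ k.2)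
      have hM1k : ∀ r', M1 r' ↑k = (A : Matrix (Fin n) (Fin n) F[X]) r' ↑k := by
        intro r'
        rw [hM1, if_neg hkj0, sub_zero]
      show (((φ A : GL (Fin n) F[X]) : Matrix (Fin n) (Fin n) F[X]) r ↑k).coeff (l' ↑k) = _
      rw [hl'ne ↑k hkj0, hBval, Polynomial.coeff_add, Polynomial.coeff_C_mul, hM1k, hM1k]
      rfl
    refine ⟨⟨hdegB, ?_⟩, ?_⟩
    · refine Matrix.ext fun r c => ?_
      rw [Matrix.map_apply, Matrix.one_apply]
      exact hB0 r c
    · rw [show (fun k : {x // x ∈ K} => colVec F n l' (φ A) ↑k)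
        = fun k : {x // x ∈ K} => twist j0 w0 hw0j0 (colVec F n l A ↑k) from funext hvB]
      exact (twist_linearIndependent_iff j0 w0 hw0j0 _).mpr hLI
  -- backward map
  have hbackward : ∀ B : GL (Fin n) F[X],
      (B ∈ Pset F n l' ∧
        LinearIndependent F (fun k : {x // x ∈ K} => colVec F n l' B ↑k)) →
      ((Uu * B * Eu⁻¹) ∈ Pset F n l ∧
        LinearIndependent F (fun k : {x // x ∈ K} => colVec F n l (Uu * B * Eu⁻¹) ↑k) ∧
        colVec F n l (Uu * B * Eu⁻¹) j0
          = ∑ k, lam k • colVec F n l (Uu * B * Eu⁻¹) ↑k) := by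
    intro B hB
    obtain ⟨hP, hLI⟩ := hB
    have hdegB' := hP.1
    have hdegB : ∀ r c, c ≠ j0 →
        ((B : Matrix (Fin n) (Fin n) F[X]) r c).degree ≤ ((l c : ℕ) : WithBot ℕ) := by
      intro r c hc
      have := hdegB' r c
      rwa [hl'ne c hc] at this
    have hdegBj0 : ∀ r, ((B : Matrix (Fin n) (Fin n) F[X]) r j0).degree
        ≤ (((l j0 - 1 : ℕ) : ℕ) : WithBot ℕ) := by
      intro r
      have := hdegB' r j0
      rwa [hl'j0] at this
    have hdegBj0' : ∀ r, ((B : Matrix (Fin n) (Fin n) F[X]) r j0).degree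
        ≤ ((l j0 : ℕ) : WithBot ℕ) := fun r => (hdegBj0 r).trans hmono
    have hcoefBj0 : ∀ r, ((B : Matrix (Fin n) (Fin n) F[X]) r j0).coeff (l j0) = 0 :=
      fun r => Polynomial.coeff_eq_zero_of_degree_lt ((hdegBj0 r).trans_lt hlt)
    have hdegBl : ∀ r c, ((B : Matrix (Fin n) (Fin n) F[X]) r c).degree
        ≤ ((l c : ℕ) : WithBot ℕ) := by
      intro r c
      by_cases hc : c = j0
      · subst hc; exact hdegBj0' r
      · exact hdegB r c hc
    have hB0 : ∀ r c, ((B : Matrix (Fin n) (Fin n) F[X]) r c).coeff 0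
        = if r = c then 1 else 0 := by
      intro r c
      have := congrFun (congrFun hP.2 r) c
      rwa [Matrix.map_apply, Matrix.one_apply] at this
    set M2 : Matrix (Fin n) (Fin n) F[X] :=
      (B : Matrix (Fin n) (Fin n) F[X]) * (1 + colMat j0 w) with hM2def
    have hM2 : ∀ r c, M2 r c = (B : Matrix (Fin n) (Fin n) F[X]) r c +
        (if c = j0 then ∑ m, (B : Matrix (Fin n) (Fin n) F[X]) r m * w m else 0) :=
      fun r c => hmulE' _ r c
    have hAval : ∀ r c, ((Uu * B * Eu⁻¹ : GL (Fin n) F[X]) : Matrix (Fin n) (Fin n) F[X]) r c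
        = M2 r c - Polynomial.C (w0 r) * M2 j0 c := by
      intro r c
      have hval : ((Uu * B * Eu⁻¹ : GL (Fin n) F[X]) : Matrix (Fin n) (Fin n) F[X])
          = (1 - colMat j0 (fun m => Polynomial.C (w0 m))) * M2 := by
        show ((Uu * B * Eu⁻¹ : (Matrix (Fin n) (Fin n) F[X])ˣ) :
          Matrix (Fin n) (Fin n) F[X]) = _
        rw [Units.val_mul, Units.val_mul, hUuval, hEuinv, mul_assoc, hM2def]
      rw [hval]
      exact hmulU' M2 r c
    have hdegM2 : ∀ r c, (M2 r c).degree ≤ ((l c : ℕ) : WithBot ℕ) := by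
      intro r c
      rw [hM2 r c]
      refine (Polynomial.degree_add_le _ _).trans (max_le (hdegBl r c) ?_)
      by_cases hc : c = j0
      · subst hc
        rw [if_pos rfl]
        exact hdegw _ (fun m => hdegBl r m)
      · rw [if_neg hc]
        simp
    have hdegA : ∀ r c, (((Uu * B * Eu⁻¹ : GL (Fin n) F[X]) :
        Matrix (Fin n) (Fin n) F[X]) r c).degree ≤ ((l c : ℕ) : WithBot ℕ) := by
      intro r c
      rw [hAval]
      exact (Polynomial.degree_sub_le _ _).trans
        (max_le (hdegM2 r c) ((hCmul _ _).trans (hdegM2 j0 c)))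
    have hcoef0M2 : ∀ r c, (M2 r c).coeff 0
        = (if r = c then 1 else 0) + (if c = j0 then w0 r else 0) := by
      intro r c
      rw [hM2 r c, Polynomial.coeff_add, hB0]
      congr 1
      by_cases hc : c = j0
      · rw [if_pos hc, if_pos hc, Polynomial.finset_sum_coeff]
        have : ∀ m, ((B : Matrix (Fin n) (Fin n) F[X]) r m * w m).coeff 0
            = if r = m then w0 m else 0 := by
          intro m
          rw [Polynomial.mul_coeff_zero, hB0, hwcoeff0, ite_mul, one_mul, zero_mul]
        rw [Finset.sum_congr rfl fun m _ => this m, Finset.sum_ite_eq]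
        simp
      · rw [if_neg hc, if_neg hc, Polynomial.coeff_zero]
    have hA0 : ∀ r c, (((Uu * B * Eu⁻¹ : GL (Fin n) F[X]) :
        Matrix (Fin n) (Fin n) F[X]) r c).coeff 0 = if r = c then 1 else 0 := by
      intro r c
      rw [hAval, Polynomial.coeff_sub, Polynomial.coeff_C_mul, hcoef0M2, hcoef0M2]
      by_cases hc : c = j0
      · rw [hc]
        simp [hw0j0]
      · rw [if_neg hc, if_neg hc, add_zero, add_zero]
        have : (if (j0 : Fin n) = c then (1 : F) else 0) = 0 := if_neg (fun h => hc h.symm)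
        rw [this, mul_zero, sub_zero]
    -- top coefficient data for M2
    have hcoefM2j0 : ∀ r, (M2 r j0).coeff (l j0)
        = ∑ k : {x // x ∈ K}, lam k *
            ((B : Matrix (Fin n) (Fin n) F[X]) r ↑k).coeff (l ↑k) := by
      intro r
      rw [hM2 r j0, if_pos rfl, Polynomial.coeff_add, hcoefBj0, zero_add, hcoeffw]
    have hvA : ∀ k : {x // x ∈ K},
        colVec F n l (Uu * B * Eu⁻¹) ↑k
          = fun r => ((B : Matrix (Fin n) (Fin n) F[X]) r ↑k).coeff (l ↑k)
              - w0 r * ((B : Matrix (Fin n) (Fin n) F[X]) j0 ↑k).coeff (l ↑k) := by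
      intro k
      funext r
      have hkj0 : (↑k : Fin n) ≠ j0 := fun h => hj0 (h ▸ k.2)
      have hM2k : ∀ r', M2 r' ↑k = (B : Matrix (Fin n) (Fin n) F[X]) r' ↑k := by
        intro r'
        rw [hM2, if_neg hkj0, add_zero]
      show (((Uu * B * Eu⁻¹ : GL (Fin n) F[X]) :
        Matrix (Fin n) (Fin n) F[X]) r ↑k).coeff (l ↑k) = _
      rw [hAval, Polynomial.coeff_sub, Polynomial.coeff_C_mul, hM2k, hM2k]
    have hvB' : ∀ k : {x // x ∈ K},
        colVec F n l' B ↑k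
          = fun r => ((B : Matrix (Fin n) (Fin n) F[X]) r ↑k).coeff (l ↑k) := by
      intro k
      funext r
      have hkj0 : (↑k : Fin n) ≠ j0 := fun h => hj0 (h ▸ k.2)
      show ((B : Matrix (Fin n) (Fin n) F[X]) r ↑k).coeff (l' ↑k) = _
      rw [hl'ne ↑k hkj0]
    have htwistA : ∀ k : {x // x ∈ K},
        twist j0 w0 hw0j0 (colVec F n l (Uu * B * Eu⁻¹) ↑k) = colVec F n l' B ↑k := by
      intro k
      funext r
      rw [hvA k, hvB' k]
      show (fun r' => _ - _) r + w0 r * ((fun r' => _ - _) j0) = _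
      simp only [hw0j0, zero_mul, sub_zero]
      ring
    have hLIA : LinearIndependent F
        (fun k : {x // x ∈ K} => colVec F n l (Uu * B * Eu⁻¹) ↑k) := by
      refine (twist_linearIndependent_iff j0 w0 hw0j0 _).mp ?_
      rw [show (fun k : {x // x ∈ K} =>
          twist j0 w0 hw0j0 (colVec F n l (Uu * B * Eu⁻¹) ↑k))
        = fun k : {x // x ∈ K} => colVec F n l' B ↑k from funext htwistA]
      exact hLI
    refine ⟨⟨hdegA, ?_⟩, hLIA, ?_⟩
    · refine Matrix.ext fun r c => ?_
      rw [Matrix.map_apply, Matrix.one_apply]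
      exact hA0 r c
    · -- the relation
      funext r
      show (((Uu * B * Eu⁻¹ : GL (Fin n) F[X]) :
        Matrix (Fin n) (Fin n) F[X]) r j0).coeff (l j0) = _
      rw [hAval, Polynomial.coeff_sub, Polynomial.coeff_C_mul, hcoefM2j0, hcoefM2j0]
      have : ((∑ k, lam k • colVec F n l (Uu * B * Eu⁻¹) ↑k : Fin n → F)) r
          = ∑ k : {x // x ∈ K}, lam k *
              (((B : Matrix (Fin n) (Fin n) F[X]) r ↑k).coeff (l ↑k)
                - w0 r * ((B : Matrix (Fin n) (Fin n) F[X]) j0 ↑k).coeff (l ↑k)) := by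
        rw [Finset.sum_apply]
        refine Finset.sum_congr rfl fun k _ => ?_
        rw [Pi.smul_apply, smul_eq_mul, hvA k]
      rw [this, Finset.mul_sum, ← Finset.sum_sub_distrib]
      refine Finset.sum_congr rfl fun k _ => ?_
      ring
  -- injectivity
  have hinj : Function.Injective φ := by
    intro A A' h
    rw [hφ] at h
    exact mul_left_cancel (mul_right_cancel h)
  -- image
  have himg : φ '' {A : GL (Fin n) F[X] | A ∈ Pset F n l ∧
      LinearIndependent F (fun k : {x // x ∈ K} => colVec F n l A ↑k) ∧
      colVec F n l A j0 = ∑ k, lam k • colVec F n l A ↑k}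
      = {B : GL (Fin n) F[X] | B ∈ Pset F n l' ∧
          LinearIndependent F (fun k : {x // x ∈ K} => colVec F n l' B ↑k)} := by
    apply Set.Subset.antisymm
    · rintro B ⟨A, hA, rfl⟩
      exact hforward A hA
    · intro B hB
      refine ⟨Uu * B * Eu⁻¹, hbackward B hB, ?_⟩
      rw [hφ]
      group
  rw [← himg, Set.ncard_image_of_injective _ hinj]

/-! ### The counting recursion -/

lemma step_count (l : Fin n → ℕ) (K : Finset (Fin n)) (j0 : Fin n) (hj0 : j0 ∉ K)
    (hle : ∀ k ∈ K, l k ≤ l j0) (h1 : 1 ≤ l j0) :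
    ((Dset F n l (insert j0 K)).ncard : ℤ)
      = (Dset F n l K).ncard + (Fintype.card F : ℤ) ^ K.card *
          (((Pset F n (Function.update l j0 (l j0 - 1))).ncard : ℤ)
            - ((Dset F n (Function.update l j0 (l j0 - 1)) K).ncard : ℤ)) := by
  classical
  set l' : Fin n → ℕ := Function.update l j0 (l j0 - 1) with hl'
  set S : ({x // x ∈ K} → F) → Set (GL (Fin n) F[X]) := fun lam =>
    {A | A ∈ Pset F n l ∧ LinearIndependent F (fun k : {x // x ∈ K} => colVec F n l A ↑k) ∧
      colVec F n l A j0 = ∑ k, lam k • colVec F n l A ↑k} with hS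
  have hmemS : ∀ lam A, A ∈ S lam ↔ (A ∈ Pset F n l ∧
      LinearIndependent F (fun k : {x // x ∈ K} => colVec F n l A ↑k) ∧
      colVec F n l A j0 = ∑ k, lam k • colVec F n l A ↑k) := fun lam A => Iff.rfl
  have hdecomp : Dset F n l (insert j0 K) = Dset F n l K ∪ ⋃ lam, S lam := by
    ext A
    simp only [Dset, Set.mem_setOf_eq, Set.mem_union, Set.mem_iUnion, hmemS]
    constructor
    · rintro ⟨hP, hdep⟩
      rcases (dep_split l K j0 hj0 A).mp hdep with h | ⟨hLI, lam, hlam⟩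
      · exact Or.inl ⟨hP, h⟩
      · exact Or.inr ⟨lam, hP, hLI, hlam⟩
    · rintro (⟨hP, h⟩ | ⟨lam, hP, hLI, hlam⟩)
      · exact ⟨hP, (dep_split l K j0 hj0 A).mpr (Or.inl h)⟩
      · exact ⟨hP, (dep_split l K j0 hj0 A).mpr (Or.inr ⟨hLI, lam, hlam⟩)⟩
  have hfinP : (Pset F n l).Finite := pset_finite l
  have hfinP' : (Pset F n l').Finite := pset_finite l'
  have hfinD : (Dset F n l K).Finite := hfinP.subset (dset_subset _ _)
  have hfinS : ∀ lam, (S lam).Finite := fun lam => hfinP.subset (fun A hA => hA.1)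
  have hfinU : (⋃ lam, S lam).Finite := Set.finite_iUnion hfinS
  have hdisj1 : Disjoint (Dset F n l K) (⋃ lam, S lam) := by
    rw [Set.disjoint_iUnion_right]
    intro lam
    rw [Set.disjoint_left]
    intro A hA hA'
    exact hA.2 hA'.2.1
  have hdisj2 : ∀ lam mu : {x // x ∈ K} → F, lam ≠ mu → Disjoint (S lam) (S mu) := by
    intro lam mu hne
    rw [Set.disjoint_left]
    intro A hA hA'
    apply hne
    funext k
    have hz : (∑ k, (lam k - mu k) • colVec F n l A ↑k) = 0 := by
      have hd : (∑ k, (lam k - mu k) • colVec F n l A ↑k)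
          = (∑ k, lam k • colVec F n l A ↑k) - (∑ k, mu k • colVec F n l A ↑k) := by
        rw [← Finset.sum_sub_distrib]
        exact Finset.sum_congr rfl fun k _ => (sub_smul _ _ _)
      rw [hd, ← hA.2.2, ← hA'.2.2, sub_self]
    exact sub_eq_zero.mp
      (Fintype.linearIndependent_iff.mp hA.2.1 (fun k => lam k - mu k) hz k)
  have hU : (⋃ lam, S lam).ncard = ∑ lam : {x // x ∈ K} → F, (S lam).ncard := by
    rw [show (⋃ lam, S lam) = ⋃ lam ∈ (Finset.univ : Finset ({x // x ∈ K} → F)), S lam by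
      simp]
    exact ncard_biUnion _ _ (fun lam _ => hfinS lam) (fun a _ b _ hab => hdisj2 a b hab)
  have hT : {B : GL (Fin n) F[X] | B ∈ Pset F n l' ∧
      LinearIndependent F (fun k : {x // x ∈ K} => colVec F n l' B ↑k)}
      = Pset F n l' \ Dset F n l' K := by
    ext B
    simp only [Set.mem_setOf_eq, Set.mem_diff, Dset]
    tauto
  have hterm : ∀ lam : {x // x ∈ K} → F, (((S lam).ncard : ℤ))
      = ((Pset F n l').ncard : ℤ) - ((Dset F n l' K).ncard : ℤ) := by
    intro lam
    have e1 : S lam = {A : GL (Fin n) F[X] | A ∈ Pset F n l ∧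
        LinearIndependent F (fun k : {x // x ∈ K} => colVec F n l A ↑k) ∧
        colVec F n l A j0 = ∑ k, lam k • colVec F n l A ↑k} := rfl
    rw [e1, slam_ncard l K j0 hj0 hle h1 lam, hT,
      Set.cast_ncard_sdiff (dset_subset _ _) hfinP']
  have hcard : Fintype.card ({x // x ∈ K} → F) = Fintype.card F ^ K.card := by
    rw [Fintype.card_fun, Fintype.card_coe]
  rw [hdecomp, Set.ncard_union_eq hdisj1 hfinD hfinU, hU, Nat.cast_add, Nat.cast_sum,
    Finset.sum_congr rfl fun lam _ => hterm lam, Finset.sum_const, Finset.card_univ, hcard]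
  push_cast
  ring

/-! ### Induction -/

variable (i : ℕ)

/-- Combine a head tuple and a tail tuple. -/
def mk (head : Fin n → ℕ) (t : {j : Fin n // i ≤ (j : ℕ) + 1} → ℕ) : Fin n → ℕ :=
  fun j => if h : i ≤ (j : ℕ) + 1 then t ⟨j, h⟩ else head j

lemma mk_update (head : Fin n → ℕ) (t : {j : Fin n // i ≤ (j : ℕ) + 1} → ℕ)
    (j0 : Fin n) (h : i ≤ (j0 : ℕ) + 1) (v : ℕ) :
    Function.update (mk i head t) j0 v = mk i head (Function.update t ⟨j0, h⟩ v) := by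
  funext j
  rw [Function.update_apply]
  simp only [mk]
  by_cases h' : i ≤ (j : ℕ) + 1
  · rw [dif_pos h', dif_pos h', Function.update_apply]
    have : ((⟨j, h'⟩ : {j : Fin n // i ≤ (j : ℕ) + 1}) = ⟨j0, h⟩) ↔ j = j0 := by
      simp [Subtype.ext_iff]
    by_cases hj : j = j0
    · rw [if_pos hj, if_pos (this.mpr hj)]
    · rw [if_neg hj, if_neg (fun hh => hj (this.mp hh))]
  · have hne : j ≠ j0 := fun hj => h' (hj ▸ h)
    rw [if_neg hne, dif_neg h', dif_neg h']

lemma claim (K : Finset (Fin n)) :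
    ∀ (hKt : ∀ k ∈ K, i ≤ (k : ℕ) + 1) (t : {j : Fin n // i ≤ (j : ℕ) + 1} → ℕ),
      (∀ k, (hk : k ∈ K) → 1 ≤ t ⟨k, hKt k hk⟩) →
      ∃ (L : Finset ({j : Fin n // i ≤ (j : ℕ) + 1} → ℕ))
        (c : ({j : Fin n // i ≤ (j : ℕ) + 1} → ℕ) → ℤ),
        (∀ s ∈ L, (∑ j, s j) < ∑ j, t j) ∧
        ∀ head : Fin n → ℕ,
          ((Dset F n (mk i head t) K).ncard : ℤ)
            = ∑ s ∈ L, c s * ((Pset F n (mk i head s)).ncard : ℤ) := by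
  classical
  induction K using Finset.strongInduction with
  | _ K ih =>
    intro hKt t ht1
    rcases K.eq_empty_or_nonempty with rfl | hne
    · refine ⟨∅, 0, by simp, ?_⟩
      intro head
      have hempty : Dset F n (mk i head t) ∅ = ∅ := by
        ext A
        haveI : IsEmpty {x : Fin n // x ∈ (∅ : Finset (Fin n))} :=
          ⟨fun x => absurd x.2 (Finset.notMem_empty _)⟩
        simp [Dset, linearIndependent_empty_type]
      rw [hempty]
      simp
    · obtain ⟨j0, hj0K, hmax⟩ := K.exists_max_image
        (fun k => if h : i ≤ (k : ℕ) + 1 then t ⟨k, h⟩ else 0) hne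
      set K' := K.erase j0 with hK'
      have hj0K' : j0 ∉ K' := Finset.notMem_erase _ _
      have hKins : insert j0 K' = K := Finset.insert_erase hj0K
      have hK'sub : K' ⊂ K := Finset.erase_ssubset hj0K
      have hKt' : ∀ k ∈ K', i ≤ (k : ℕ) + 1 := fun k hk => hKt k (Finset.mem_of_mem_erase hk)
      have ht1' : ∀ k, (hk : k ∈ K') → 1 ≤ t ⟨k, hKt' k hk⟩ :=
        fun k hk => ht1 k (Finset.mem_of_mem_erase hk)
      set j0τ : {j : Fin n // i ≤ (j : ℕ) + 1} := ⟨j0, hKt j0 hj0K⟩ with hj0τ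
      set t' := Function.update t j0τ (t j0τ - 1) with ht'
      have ht1'' : ∀ k, (hk : k ∈ K') → 1 ≤ t' ⟨k, hKt' k hk⟩ := by
        intro k hk
        have hkj0 : (⟨k, hKt' k hk⟩ : {j : Fin n // i ≤ (j : ℕ) + 1}) ≠ j0τ := by
          intro h
          exact (Finset.ne_of_mem_erase hk) (congrArg Subtype.val h)
        rw [ht', Function.update_of_ne hkj0]
        exact ht1' k hk
      obtain ⟨L₁, c₁, hL₁, H₁⟩ := ih K' hK'sub hKt' t ht1'
      obtain ⟨L₂, c₂, hL₂, H₂⟩ := ih K' hK'sub hKt' t' ht1''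
      have hsum : (∑ j, t' j) < ∑ j, t j := by
        rw [ht', Finset.sum_update_of_mem (Finset.mem_univ j0τ),
          Finset.sdiff_singleton_eq_erase,
          ← Finset.add_sum_erase _ t (Finset.mem_univ j0τ)]
        have hge : 1 ≤ t j0τ := ht1 j0 hj0K
        omega
      set Q : ℤ := (Fintype.card F : ℤ) ^ K'.card with hQ
      refine ⟨insert t' (L₁ ∪ L₂), fun s =>
        (if s ∈ L₁ then c₁ s else 0) + (if s = t' then Q else 0)
          - Q * (if s ∈ L₂ then c₂ s else 0), ?_, ?_⟩
      · intro s hs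
        rcases Finset.mem_insert.mp hs with rfl | hs'
        · exact hsum
        · rcases Finset.mem_union.mp hs' with h | h
          · exact hL₁ s h
          · exact (hL₂ s h).trans hsum
      · intro head
        have hmkj0 : mk i head t j0 = t j0τ := by
          simp only [mk]
          rw [dif_pos (hKt j0 hj0K)]
        have hle : ∀ k ∈ K', mk i head t k ≤ mk i head t j0 := by
          intro k hk
          have h1 : mk i head t k = t ⟨k, hKt' k hk⟩ := by
            simp only [mk]
            rw [dif_pos (hKt' k hk)]
          rw [h1, hmkj0]
          have h2 := hmax k (Finset.mem_of_mem_erase hk)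
          rwa [dif_pos (hKt' k hk), dif_pos (hKt j0 hj0K)] at h2
        have h1' : 1 ≤ mk i head t j0 := by
          rw [hmkj0]
          exact ht1 j0 hj0K
        have hupd : Function.update (mk i head t) j0 (mk i head t j0 - 1)
            = mk i head t' := by
          rw [hmkj0, ht']
          exact mk_update i head t j0 (hKt j0 hj0K) (t j0τ - 1)
        have hstep := step_count (F := F) (mk i head t) K' j0 hj0K' hle h1'
        rw [hupd] at hstep
        rw [← hKins, hstep, H₁ head, H₂ head]
        have hsub1 : L₁ ⊆ insert t' (L₁ ∪ L₂) :=
          (Finset.subset_union_left).trans (Finset.subset_insert _ _)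
        have hsub2 : L₂ ⊆ insert t' (L₁ ∪ L₂) :=
          (Finset.subset_union_right).trans (Finset.subset_insert _ _)
        have ht'mem : t' ∈ insert t' (L₁ ∪ L₂) := Finset.mem_insert_self _ _
        have hsplit : ∀ s ∈ insert t' (L₁ ∪ L₂),
            ((if s ∈ L₁ then c₁ s else 0) + (if s = t' then Q else 0)
              - Q * (if s ∈ L₂ then c₂ s else 0)) * ((Pset F n (mk i head s)).ncard : ℤ)
            = (if s ∈ L₁ then c₁ s * ((Pset F n (mk i head s)).ncard : ℤ) else 0)
              + (if s = t' then Q * ((Pset F n (mk i head s)).ncard : ℤ) else 0)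
              - Q * (if s ∈ L₂ then c₂ s * ((Pset F n (mk i head s)).ncard : ℤ) else 0) := by
          intro s _
          split_ifs <;> ring
        rw [Finset.sum_congr rfl hsplit, Finset.sum_sub_distrib, Finset.sum_add_distrib,
          Finset.sum_ite_mem, Finset.inter_eq_right.mpr hsub1,
          Finset.sum_ite_eq' (insert t' (L₁ ∪ L₂)) t'
            (fun s => Q * ((Pset F n (mk i head s)).ncard : ℤ)),
          if_pos ht'mem, ← Finset.mul_sum,
          Finset.sum_ite_mem, Finset.inter_eq_right.mpr hsub2]
        ring

end Stmt9

/-- For `2 ≤ i ≤ n` and `l_i ≥ ⋯ ≥ lₙ ≥ 1`, there are a finite set `L` of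
`(n-i+1)`-tuples, each of total sum smaller than `l_i + ⋯ + lₙ`, and integer coefficients
`c_t` (independent of `l₁,…,l_{i-1}`) with
`#R^i_{n;l₁,…,lₙ} = Σ_{t ∈ L} c_t · #P_{n;l₁,…,l_{i-1},t_i,…,tₙ}` for every choice of
`l₁,…,l_{i-1}`. -/
theorem stmt_9 (F : Type*) [Field F] [Fintype F] (q : ℕ) (hq : Fintype.card F = q)
    (n i : ℕ) (hn : 2 ≤ n) (hi2 : 2 ≤ i) (hin : i ≤ n)
    (ltail : {j : Fin n // i ≤ (j : ℕ) + 1} → ℕ)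
    (hdesc : ∀ j j' : {j : Fin n // i ≤ (j : ℕ) + 1}, j.1 ≤ j'.1 → ltail j' ≤ ltail j)
    (hpos : ∀ j, 1 ≤ ltail j) :
    ∃ (L : Finset ({j : Fin n // i ≤ (j : ℕ) + 1} → ℕ))
      (c : ({j : Fin n // i ≤ (j : ℕ) + 1} → ℕ) → ℤ),
      (∀ t ∈ L, (∑ j, t j) < ∑ j, ltail j) ∧
      ∀ head : Fin n → ℕ,
        ((Rset F n (fun j => if h : i ≤ (j : ℕ) + 1 then ltail ⟨j, h⟩ else head j) i).ncard : ℤ)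
          = ∑ t ∈ L, c t *
              ((Pset F n (fun j => if h : i ≤ (j : ℕ) + 1 then t ⟨j, h⟩ else head j)).ncard : ℤ) := by
  classical
  set K : Finset (Fin n) := Finset.univ.filter (fun j : Fin n => i ≤ (j : ℕ) + 1) with hK
  have hKt : ∀ k ∈ K, i ≤ (k : ℕ) + 1 := fun k hk => (Finset.mem_filter.mp hk).2
  have ht1 : ∀ k, (hk : k ∈ K) → 1 ≤ ltail ⟨k, hKt k hk⟩ := fun k hk => hpos _
  obtain ⟨L, c, hL, H⟩ := Stmt9.claim (F := F) i K hKt ltail ht1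
  refine ⟨L, c, hL, ?_⟩
  intro head
  have hR : Rset F n (Stmt9.mk i head ltail) i
      = Stmt9.Dset F n (Stmt9.mk i head ltail) K := by
    ext A
    have hiff : LinearIndependent F
        (fun j : {j : Fin n // i ≤ (j : ℕ) + 1} =>
          colVec F n (Stmt9.mk i head ltail) A ↑j)
        ↔ LinearIndependent F
            (fun k : {x : Fin n // x ∈ K} => colVec F n (Stmt9.mk i head ltail) A ↑k) :=
      linearIndependent_equiv'
        (Equiv.subtypeEquivRight (q := fun j : Fin n => i ≤ (j : ℕ) + 1)
          (fun x => by simp [hK]))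
        (f := fun j : {j : Fin n // i ≤ (j : ℕ) + 1} =>
          colVec F n (Stmt9.mk i head ltail) A ↑j)
        (g := fun k : {x : Fin n // x ∈ K} => colVec F n (Stmt9.mk i head ltail) A ↑k)
        rfl |>.symm
    constructor
    · rintro ⟨h1, h2⟩
      exact ⟨h1, fun hLI => h2 (hiff.mpr hLI)⟩
    · rintro ⟨h1, h2⟩
      exact ⟨h1, fun hLI => h2 (hiff.mp hLI)⟩
  show ((Rset F n (Stmt9.mk i head ltail) i).ncard : ℤ)
      = ∑ t ∈ L, c t * ((Pset F n (Stmt9.mk i head t)).ncard : ℤ)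
  rw [hR]
  exact H head
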